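/- For the minority rule, finality is preserved: if the triple (E_t(i-1), E_t(i), E_t(i+1)) is not 101 or 010, then the triple (E_{t+1}(i-1), E_{t+1}(i), E_{t+1}(i+1)) is also not 101 or 010. -/
import Mathlib


/-- The minority rule on bits. -/
def mino (a b c : Fin 2) : Fin 2 := if a.val + b.val + c.val ≤ 1 then 1 else 0

/-- A location `i` is final at configuration `σ` if its neighborhood pattern
is not 101 nor 010. -/
def MinFinal {n : ℕ} (σ : ZMod n → Fin 2) (i : ZMod n) : Prop :=
  ¬((σ (i - 1), σ i, σ (i + 1)) = ((1 : Fin 2), (0 : Fin 2), (1 : Fin 2)) ∨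
    (σ (i - 1), σ i, σ (i + 1)) = ((0 : Fin 2), (1 : Fin 2), (0 : Fin 2)))

theorem mino_finality_preserved (n : ℕ) (hn : 5 ≤ n)
    (E : ℕ → ZMod n → Fin 2)
    (hE : ∀ t (i : ZMod n),
      E (t + 1) i = mino (E t (i - 1)) (E t i) (E t (i + 1)))
    (t : ℕ) (i : ZMod n) (h : MinFinal (E t) i) :
    MinFinal (E (t + 1)) i := by
  unfold MinFinal at h ⊢
  rw [hE, hE, hE, show i - 1 + 1 = i by ring, show i + 1 - 1 = i by ring]
  generalize E t (i - 1 - 1) = a at *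
  generalize E t (i - 1) = b at *
  generalize E t i = c at *
  generalize E t (i + 1) = d at *
  generalize E t (i + 1 + 1) = e at *
  fin_cases a <;> fin_cases b <;> fin_cases c <;> fin_cases d <;> fin_cases e <;>
    simp_all [mino] <;> decide
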